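/- Let {X_n} be an amenable exhaustive sequence for a group G, and let N ⊆ G be a (U,W)-net with U, W finite and nonempty. Then the lower density of N with respect to {X_n} is at least 1/|W|, and the upper density of N with respect to {X_n} is at most 1/|U|. That is, liminf_n |N ∩ X_n|/|X_n| ≥ 1/|W| and limsup_n |N ∩ X_n|/|X_n| ≤ 1/|U|. -/

import Mathlib

open Filter Pointwise

def IsExhaustive {G : Type*} (X : ℕ → Finset G) : Prop :=
  (∀ n, X n ⊆ X (n + 1)) ∧ ∀ g : G, ∃ n, g ∈ X n

def IsFolner {G : Type*} [Group G] [DecidableEq G] (X : ℕ → Finset G) : Prop :=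
  IsExhaustive X ∧ ∀ E : Finset G,
    Tendsto (fun n => (((X n * E⁻¹) \ X n).card : ℝ) / (X n).card) atTop (nhds 0)

def IsNet {G : Type*} [Group G] (U W N : Set G) : Prop :=
  (∀ x ∈ N, ∀ y ∈ N, x ≠ y → Disjoint (x • U) (y • U)) ∧ N * W = Set.univ

open Finset in
lemma net_lower_aux {G : Type*} [Group G] [DecidableEq G] (N : Set G)
    [DecidablePred (· ∈ N)] (U W : Finset G)
    (hN : IsNet (U : Set G) (W : Set G) N) (X : Finset G) :
    X.card ≤ ((X * W⁻¹).filter (· ∈ N)).card * W.card := by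
  have hsub : X ⊆ ((X * W⁻¹).filter (· ∈ N)).biUnion (fun x => x • W) := by
    intro g hg
    have hg' : g ∈ N * (W : Set G) := by rw [hN.2]; trivial
    obtain ⟨x, hx, w, hw, rfl⟩ := hg'
    refine mem_biUnion.2 ⟨x, mem_filter.2 ⟨?_, hx⟩, ?_⟩
    · have := Finset.mul_mem_mul hg (Finset.inv_mem_inv (by exact_mod_cast hw : w ∈ W))
      simpa using this
    · exact mem_smul_finset.2 ⟨w, by exact_mod_cast hw, rfl⟩
  calc X.card ≤ _ := card_le_card hsub
    _ ≤ ∑ x ∈ (X * W⁻¹).filter (· ∈ N), (x • W).card := card_biUnion_le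
    _ = ((X * W⁻¹).filter (· ∈ N)).card * W.card := by
        simp [card_smul_finset]

open Finset in
lemma net_upper_aux {G : Type*} [Group G] [DecidableEq G] (N : Set G)
    [DecidablePred (· ∈ N)] (U W : Finset G)
    (hN : IsNet (U : Set G) (W : Set G) N) (X : Finset G) :
    (X.filter (· ∈ N)).card * U.card ≤ X.card + ((X * U) \ X).card := by
  have hcard : ((X.filter (· ∈ N)).biUnion (fun x => x • U)).card
      = (X.filter (· ∈ N)).card * U.card := by
    rw [Finset.card_biUnion]
    · simp [card_smul_finset]
    · intro x hx y hy hxy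
      have := hN.1 x (mem_filter.1 hx).2 y (mem_filter.1 hy).2 hxy
      rw [Function.onFun_apply, ← Finset.disjoint_coe]
      simpa [Finset.coe_smul_finset] using this
  have hsub : (X.filter (· ∈ N)).biUnion (fun x => x • U) ⊆ X * U := by
    intro g hg
    obtain ⟨x, hx, hg⟩ := mem_biUnion.1 hg
    obtain ⟨u, hu, rfl⟩ := mem_smul_finset.1 hg
    exact mul_mem_mul (mem_filter.1 hx).1 hu
  calc (X.filter (· ∈ N)).card * U.card = _ := hcard.symm
    _ ≤ (X * U).card := card_le_card hsub
    _ ≤ ((X * U) ∪ X).card := card_le_card subset_union_left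
    _ = ((X * U) \ X).card + X.card := (card_sdiff_add_card _ _).symm
    _ = X.card + ((X * U) \ X).card := by ring

/-- The lower density of a `(U,W)`-net w.r.t. an amenable exhaustive sequence is
at least `1/|W|`, and its upper density is at most `1/|U|`. -/
theorem net_density_bounds {G : Type*} [Group G] [DecidableEq G]
    (X : ℕ → Finset G) (hX : IsFolner X)
    (U W : Finset G) (hU : U.Nonempty) (hW : W.Nonempty)
    (N : Set G) (hN : IsNet (U : Set G) (W : Set G) N) :
    (1 : ℝ) / W.card ≤ liminf (fun n => ((N ∩ (X n : Set G)).ncard : ℝ) / (X n).card) atTop ∧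
    limsup (fun n => ((N ∩ (X n : Set G)).ncard : ℝ) / (X n).card) atTop ≤ (1 : ℝ) / U.card := by
  classical
  obtain ⟨⟨hmono, hexh⟩, hfol⟩ := hX
  have hmono' : Monotone X := monotone_nat_of_le_succ (fun n => hmono n)
  obtain ⟨n0, hn0⟩ := hexh 1
  have hpos : ∀ n, n0 ≤ n → 0 < ((X n).card : ℝ) := by
    intro n hn
    exact_mod_cast Finset.card_pos.2 ⟨1, hmono' hn hn0⟩
  set a : ℕ → ℝ := fun n => ((N ∩ (X n : Set G)).ncard : ℝ) / (X n).card with ha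
  have hacard : ∀ n, ((N ∩ (X n : Set G)).ncard : ℝ)
      = (((X n).filter (· ∈ N)).card : ℝ) := by
    intro n
    norm_cast
    rw [show N ∩ ↑(X n) = ↑((X n).filter (· ∈ N)) by ext g; simp [and_comm],
      Set.ncard_coe_finset]
  have ha0 : ∀ n, 0 ≤ a n := fun n => by positivity
  have ha1 : ∀ n, a n ≤ 1 := by
    intro n
    rw [ha]; simp only
    rw [hacard]
    apply div_le_one_of_le₀ _ (by positivity)
    exact_mod_cast Finset.card_le_card (Finset.filter_subset _ _)
  have hUpos : (0:ℝ) < U.card := by exact_mod_cast Finset.card_pos.2 hU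
  have hWpos : (0:ℝ) < W.card := by exact_mod_cast Finset.card_pos.2 hW
  have hU1 : (1:ℝ) ≤ U.card := by exact_mod_cast Finset.card_pos.2 hU
  constructor
  · -- lower bound
    set t : ℕ → ℝ := fun n => (((X n * W⁻¹) \ X n).card : ℝ) / (X n).card with hT
    have ht : Tendsto t atTop (nhds 0) := hfol W
    have htc : Tendsto (fun n => 1 / (W.card : ℝ) - t n) atTop (nhds (1 / W.card)) := by
      simpa using (tendsto_const_nhds (x := 1 / (W.card:ℝ))).sub ht
    have hlow : ∀ᶠ n in atTop, 1 / (W.card:ℝ) - t n ≤ a n := by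
      filter_upwards [eventually_ge_atTop n0] with n hn
      have hx := hpos n hn
      have key := net_lower_aux N U W hN (X n)
      have hsplit : ((X n * W⁻¹).filter (· ∈ N)).card
          ≤ ((X n).filter (· ∈ N)).card + ((X n * W⁻¹) \ X n).card := by
        have : (X n * W⁻¹).filter (· ∈ N)
            ⊆ ((X n).filter (· ∈ N)) ∪ ((X n * W⁻¹) \ X n) := by
          intro x hx'
          obtain ⟨hx1, hx2⟩ := Finset.mem_filter.1 hx'
          by_cases hxn : x ∈ X n
          · exact Finset.mem_union_left _ (Finset.mem_filter.2 ⟨hxn, hx2⟩)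
          · exact Finset.mem_union_right _ (Finset.mem_sdiff.2 ⟨hx1, hxn⟩)
        exact le_trans (Finset.card_le_card this) (Finset.card_union_le _ _)
      have keyR : ((X n).card : ℝ)
          ≤ ((((X n).filter (· ∈ N)).card : ℝ) + (((X n * W⁻¹) \ X n).card : ℝ)) * W.card := by
        have := le_trans key (Nat.mul_le_mul_right _ hsplit)
        exact_mod_cast this
      rw [ha]; simp only; rw [hacard, hT]
      rw [sub_le_iff_le_add, ← add_div, div_le_div_iff₀ hWpos hx]
      linarith
    have hlim : liminf (fun n => 1 / (W.card:ℝ) - t n) atTop = 1 / W.card :=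
      htc.liminf_eq
    refine hlim ▸ liminf_le_liminf hlow ?_ ?_
    · exact htc.isBoundedUnder_ge
    · exact (isBoundedUnder_of ⟨1, fun n => ha1 n⟩ :
        IsBoundedUnder (· ≤ ·) atTop a).isCoboundedUnder_ge
  · -- upper bound
    set s : ℕ → ℝ := fun n => (((X n * U) \ X n).card : ℝ) / (X n).card with hS
    have hs : Tendsto s atTop (nhds 0) := by
      have := hfol U⁻¹
      simpa [inv_inv] using this
    have hsc : Tendsto (fun n => 1 / (U.card : ℝ) + s n) atTop (nhds (1 / U.card)) := by
      simpa using (tendsto_const_nhds (x := 1 / (U.card:ℝ))).add hs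
    have hupp : ∀ᶠ n in atTop, a n ≤ 1 / (U.card:ℝ) + s n := by
      filter_upwards [eventually_ge_atTop n0] with n hn
      have hx := hpos n hn
      have key := net_upper_aux N U W hN (X n)
      have keyR : (((X n).filter (· ∈ N)).card : ℝ) * U.card
          ≤ ((X n).card : ℝ) + (((X n * U) \ X n).card : ℝ) := by exact_mod_cast key
      have hD : (0:ℝ) ≤ (((X n * U) \ X n).card : ℝ) := by positivity
      rw [ha]; simp only; rw [hacard, hS]
      rw [div_add_div _ _ (ne_of_gt hUpos) (ne_of_gt hx), div_le_div_iff₀ hx (by positivity)]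
      nlinarith [mul_le_mul_of_nonneg_right keyR hx.le,
        mul_nonneg (mul_nonneg (sub_nonneg.2 hU1) hD) hx.le]
    have hlim : limsup (fun n => 1 / (U.card:ℝ) + s n) atTop = 1 / U.card :=
      hsc.limsup_eq
    refine hlim ▸ limsup_le_limsup hupp ?_ ?_
    · exact (isBoundedUnder_of ⟨0, fun n => ha0 n⟩ :
        IsBoundedUnder (· ≥ ·) atTop a).isCoboundedUnder_le
    · exact hsc.isBoundedUnder_le
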